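/- arXiv:2101.08519 — 2 statements merged into one kernel-verified Lean document; each statement's English description precedes it below -/
import Mathlib

section
/- Let h : ℝ^n → ℝ be differentiable with L_h-Lipschitz gradient ∇h and g : ℝ^n → ℝ be lower semicontinuous and ρ_g-weakly convex with the implicit bounded subgradient property with constant L̂_g > 0. Let η ∈ (0, 2), 0 < γ < 2/((ρ_g + L_h)(1 + √(1 + 2(2 − η)ηL_h²/(ρ_g + L_h)²))), and fix an integer K ≥ 1. Assume b lies in the column space of A and σ̃ > 0 satisfies ‖Aᵀv‖² ≥ σ̃‖v‖² for every v in the column space of A; set c_{γ,A} := γ²σ̃. Let (x^k, z^k, λ^k) be LiMEAL iterates with penalty parameters β_k > 0 chosen so that α_k := (β_k + β_{k+1} + γη(1 − η/2))/(2c_{γ,A}β_k²) = ᾱ*/K for every k, where 0 < ᾱ* ≤ min{ (1 − γ(ρ_g + L_h) − η(1 − η/2)γ²L_h²)/(8γ(1 + γ²L_h²)), (1/(16γ))(2/η − 1) }. Suppose Ẽ^k := P_{β_k}(x^k, z^k, λ^k) + 4α_k(γ²L_h²‖x^k − x^{k−1}‖² + ‖z^k − z^{k−1}‖²) ≥ E*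 for all 1 ≤ k ≤ K + 1. Then min_{1≤t≤K} G_t ≤ √( (Ẽ¹ − E* + 16γ²L̂_g²ᾱ*) / ((γη/4)(1 − η/2)) ) / √K, where G_t := √(‖γ⁻¹(z^t − x^{t+1}) + ∇h(x^{t+1}) − ∇h(x^t)‖² + β_t⁻²‖λ^{t+1} − λ^t‖²). -/
set_option maxHeartbeats 2000000


open scoped RealInnerProductSpace

/-- `P_β(x, z, λ) = f(x) + ⟨λ, Ax − b⟩ + (β/2)‖Ax − b‖² + (1/(2γ))‖x − z‖²`. -/
noncomputable def Pfun {n m : ℕ} (f : EuclideanSpace ℝ (Fin n) → ℝ)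
    (A : Matrix (Fin m) (Fin n) ℝ) (b : EuclideanSpace ℝ (Fin m)) (γ β : ℝ)
    (x z : EuclideanSpace ℝ (Fin n)) (lam : EuclideanSpace ℝ (Fin m)) : ℝ :=
  f x + ⟪lam, Matrix.toEuclideanLin A x - b⟫
    + β / 2 * ‖Matrix.toEuclideanLin A x - b‖ ^ 2 + 1 / (2 * γ) * ‖x - z‖ ^ 2

section Aux

open Filter

variable {E : Type*} [NormedAddCommGroup E] [InnerProductSpace ℝ E]

lemma normsq_add_le (a b : E) : ‖a + b‖^2 ≤ 2*‖a‖^2 + 2*‖b‖^2 := by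
  have h1 : ‖a + b‖^2 = ‖a‖^2 + 2*⟪a,b⟫ + ‖b‖^2 := norm_add_sq_real a b
  nlinarith [real_inner_le_norm a b, norm_nonneg a, norm_nonneg b, sq_nonneg (‖a‖ - ‖b‖)]

lemma norm_combo_sq (a b : E) (θ : ℝ) :
    ‖(1-θ)•a + θ•b‖^2 = (1-θ)*‖a‖^2 + θ*‖b‖^2 - θ*(1-θ)*‖a-b‖^2 := by
  have h1 : (1-θ)•a + θ•b = a + θ•(b-a) := by module
  rw [h1, norm_add_sq_real, inner_smul_right, norm_smul,
    inner_sub_right, real_inner_self_eq_norm_sq]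
  rw [norm_sub_rev b a]
  simp only [Real.norm_eq_abs, mul_pow, sq_abs]
  linear_combination θ * (norm_sub_sq_real a b)

lemma min_strong {F : E → ℝ} {μ : ℝ} {xs : E}
    (hmin : ∀ y, F xs ≤ F y)
    (hcombo : ∀ (y : E) (θ : ℝ), 0 ≤ θ → θ ≤ 1 →
      F ((1-θ)•xs + θ•y) ≤ (1-θ)*F xs + θ*F y - θ*(1-θ)*(μ/2)*‖xs-y‖^2)
    (y : E) : F xs + μ/2*‖y-xs‖^2 ≤ F y := by
  have key : ∀ θ : ℝ, 0 < θ → θ ≤ 1 → (1-θ)*(μ/2)*‖xs-y‖^2 ≤ F y - F xs := by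
    intro θ h0 h1
    have h2 := hcombo y θ h0.le h1
    have h3 := hmin ((1-θ)•xs + θ•y)
    have h4 : θ*(1-θ)*(μ/2)*‖xs-y‖^2 ≤ θ*(F y - F xs) := by nlinarith
    have := (mul_le_mul_iff_right₀ h0).mp (by linarith [h4] : θ*((1-θ)*(μ/2)*‖xs-y‖^2) ≤ θ*(F y - F xs))
    linarith
  have lim : Tendsto (fun j : ℕ => (1-1/(j+1:ℝ))*(μ/2)*‖xs-y‖^2) atTop
      (nhds ((1-0)*(μ/2)*‖xs-y‖^2)) := by
    exact ((tendsto_const_nhds.sub tendsto_one_div_add_atTop_nhds_zero_nat).mul_const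
      (μ/2)).mul_const _
  have hle : (1-(0:ℝ))*(μ/2)*‖xs-y‖^2 ≤ F y - F xs := by
    refine le_of_tendsto lim (Eventually.of_forall fun j => ?_)
    refine key _ (by positivity) ?_
    rw [div_le_one (by positivity)]
    linarith [Nat.cast_nonneg (α := ℝ) j]
  rw [norm_sub_rev] at hle
  linarith

variable [CompleteSpace E]

lemma descent_lemma {h : E → ℝ} {h' : E → E} {L : ℝ}
    (hh' : ∀ x, HasGradientAt h (h' x) x)
    (hL : ∀ x y, ‖h' x - h' y‖ ≤ L * ‖x - y‖) (u v : E) :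
    h v ≤ h u + ⟪h' u, v - u⟫ + L/2 * ‖v - u‖^2 := by
  set d := v - u with hd
  have hline : ∀ t : ℝ, HasDerivAt (fun s : ℝ => h (u + s • d)) ⟪h' (u + t • d), d⟫ t := by
    intro t
    have h1 : HasDerivAt (fun s : ℝ => u + s • d) d t := by
      simpa using ((hasDerivAt_id t).smul_const d).const_add u
    have h2 := (hh' (u + t • d)).hasFDerivAt.comp_hasDerivAt t h1
    simpa [InnerProductSpace.toDual_apply_apply, Function.comp_def] using h2
  have hcont : Continuous fun t : ℝ => ⟪h' (u + t • d), d⟫ := by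
    have hlip : LipschitzWith (Real.toNNReal (L * ‖d‖)) (fun t : ℝ => h' (u + t • d)) := by
      apply LipschitzWith.of_dist_le_mul
      intro s t
      rw [dist_eq_norm, Real.dist_eq]
      calc ‖h' (u + s • d) - h' (u + t • d)‖ ≤ L * ‖(u + s • d) - (u + t • d)‖ := hL _ _
        _ = L * (|s - t| * ‖d‖) := by
            rw [add_sub_add_left_eq_sub, ← sub_smul, norm_smul, Real.norm_eq_abs]
        _ ≤ (Real.toNNReal (L * ‖d‖) : ℝ) * |s - t| := by
            rcases le_or_gt 0 L with hL0 | hL0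
            · rw [Real.coe_toNNReal _ (by positivity)]
              exact le_of_eq (by ring)
            · have h1 : L * (|s - t| * ‖d‖) ≤ 0 :=
                mul_nonpos_of_nonpos_of_nonneg hL0.le (by positivity)
              exact h1.trans (by positivity)
    exact Continuous.inner hlip.continuous continuous_const
  have hint : h v - h u = ∫ t in (0:ℝ)..1, ⟪h' (u + t • d), d⟫ := by
    have := intervalIntegral.integral_eq_sub_of_hasDerivAt
      (f := fun s : ℝ => h (u + s • d)) (a := 0) (b := 1)
      (fun t _ => hline t) (hcont.intervalIntegrable 0 1)
    simp only [zero_smul, add_zero, one_smul] at this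
    rw [this]
    congr 1 <;> simp [hd]
  have hmono : (∫ t in (0:ℝ)..1, ⟪h' (u + t • d), d⟫)
      ≤ ∫ t in (0:ℝ)..1, (⟪h' u, d⟫ + L * t * ‖d‖^2) := by
    apply intervalIntegral.integral_mono_on (by norm_num) (hcont.intervalIntegrable 0 1)
    · exact (Continuous.intervalIntegrable (by continuity) 0 1)
    · intro t ht
      rcases ht with ⟨ht0, ht1⟩
      have h1 : ⟪h' (u + t • d), d⟫ - ⟪h' u, d⟫ = ⟪h' (u + t • d) - h' u, d⟫ := by
        rw [inner_sub_left]
      have h2 : ⟪h' (u + t • d) - h' u, d⟫ ≤ ‖h' (u + t • d) - h' u‖ * ‖d‖ :=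
        real_inner_le_norm _ _
      have h3 : ‖h' (u + t • d) - h' u‖ ≤ L * (t * ‖d‖) := by
        have := hL (u + t • d) u
        simpa [norm_smul, Real.norm_eq_abs, abs_of_nonneg ht0] using this
      nlinarith [norm_nonneg d]
  have hval : (∫ t in (0:ℝ)..1, (⟪h' u, d⟫ + L * t * ‖d‖^2)) = ⟪h' u, d⟫ + L/2 * ‖d‖^2 := by
    rw [intervalIntegral.integral_add (intervalIntegrable_const)
      (Continuous.intervalIntegrable (by continuity) 0 1)]
    simp only [intervalIntegral.integral_const, smul_eq_mul, sub_zero, one_mul]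
    have : (∫ t in (0:ℝ)..1, L * t * ‖d‖^2) = ∫ t in (0:ℝ)..1, (L * ‖d‖^2) * t := by
      congr 1; ext t; ring
    rw [this, intervalIntegral.integral_const_mul, integral_id]
    ring
  linarith [hint, hmono, hval.le, hval.ge]

end Aux

/-- Theorem 3(b): `O(1/√K)` bound for LiMEAL under the implicit bounded subgradient
assumption. -/
theorem stmt_16 (n m : ℕ) (A : Matrix (Fin m) (Fin n) ℝ) (b : EuclideanSpace ℝ (Fin m))
    (h : EuclideanSpace ℝ (Fin n) → ℝ)
    (h' : EuclideanSpace ℝ (Fin n) → EuclideanSpace ℝ (Fin n))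
    (g : EuclideanSpace ℝ (Fin n) → ℝ) (ρg γ η Lh Lghat σ αbar Estar : ℝ)
    (K : ℕ) (hK : 1 ≤ K)
    (hρg : 0 < ρg) (hη0 : 0 < η) (hη2 : η < 2)
    (hγ0 : 0 < γ)
    (hγ : γ < 2 / ((ρg + Lh) * (1 + Real.sqrt (1 + 2 * (2 - η) * η * Lh ^ 2 / (ρg + Lh) ^ 2))))
    (hLg : 0 < Lghat) (hσ : 0 < σ)
    (hh' : ∀ x, HasGradientAt h (h' x) x)
    (hLh : ∀ x y, ‖h' x - h' y‖ ≤ Lh * ‖x - y‖)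
    (hlsc : LowerSemicontinuous g)
    (hwc : ConvexOn ℝ Set.univ fun x => g x + ρg / 2 * ‖x‖ ^ 2)
    (prox : EuclideanSpace ℝ (Fin n) → EuclideanSpace ℝ (Fin n))
    (hproxmin : ∀ w x, g (prox w) + 1 / (2 * γ) * ‖prox w - w‖ ^ 2
        ≤ g x + 1 / (2 * γ) * ‖x - w‖ ^ 2)
    (hproxuniq : ∀ w x, (∀ y, g x + 1 / (2 * γ) * ‖x - w‖ ^ 2
        ≤ g y + 1 / (2 * γ) * ‖y - w‖ ^ 2) → x = prox w)
    (hbnd : ∀ w, ‖γ⁻¹ • (w - prox w)‖ ≤ Lghat)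
    (hb : b ∈ LinearMap.range (Matrix.toEuclideanLin A))
    (hσA : ∀ v ∈ LinearMap.range (Matrix.toEuclideanLin A),
      σ * ‖v‖ ^ 2 ≤ ‖Matrix.toEuclideanLin A.transpose v‖ ^ 2)
    (β : ℕ → ℝ) (hβ : ∀ k, 0 < β k)
    (hαk : ∀ k, (β k + β (k + 1) + γ * η * (1 - η / 2)) / (2 * (γ ^ 2 * σ) * β k ^ 2)
        = αbar / K)
    (hαbar0 : 0 < αbar)
    (hαbar : αbar ≤ min
        ((1 - γ * (ρg + Lh) - η * (1 - η / 2) * γ ^ 2 * Lh ^ 2)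
          / (8 * γ * (1 + γ ^ 2 * Lh ^ 2)))
        (1 / (16 * γ) * (2 / η - 1)))
    (x z : ℕ → EuclideanSpace ℝ (Fin n)) (lam : ℕ → EuclideanSpace ℝ (Fin m))
    (hxmin : ∀ k x',
      h (x k) + ⟪h' (x k), x (k + 1) - x k⟫ + g (x (k + 1))
          + ⟪lam k, Matrix.toEuclideanLin A (x (k + 1)) - b⟫
          + β k / 2 * ‖Matrix.toEuclideanLin A (x (k + 1)) - b‖ ^ 2
          + 1 / (2 * γ) * ‖x (k + 1) - z k‖ ^ 2
        ≤ h (x k) + ⟪h' (x k), x' - x k⟫ + g x'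
          + ⟪lam k, Matrix.toEuclideanLin A x' - b⟫
          + β k / 2 * ‖Matrix.toEuclideanLin A x' - b‖ ^ 2
          + 1 / (2 * γ) * ‖x' - z k‖ ^ 2)
    (hz : ∀ k, z (k + 1) = z k - η • (z k - x (k + 1)))
    (hlam : ∀ k, lam (k + 1) = lam k + β k • (Matrix.toEuclideanLin A (x (k + 1)) - b))
    (hprox : ∀ k, x (k + 1)
        = prox (z k - γ • (h' (x k) + Matrix.toEuclideanLin A.transpose (lam (k + 1)))))
    (hEt : ∀ k, 1 ≤ k → k ≤ K + 1 →
      Estar ≤ Pfun (fun a => h a + g a) A b γ (β k) (x k) (z k) (lam k)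
          + 4 * (αbar / K)
            * (γ ^ 2 * Lh ^ 2 * ‖x k - x (k - 1)‖ ^ 2 + ‖z k - z (k - 1)‖ ^ 2)) :
    sInf ((fun t => Real.sqrt
          (‖γ⁻¹ • (z t - x (t + 1)) + h' (x (t + 1)) - h' (x t)‖ ^ 2
            + (β t ^ 2)⁻¹ * ‖lam (t + 1) - lam t‖ ^ 2)) '' Set.Icc 1 K)
      ≤ Real.sqrt ((Pfun (fun a => h a + g a) A b γ (β 1) (x 1) (z 1) (lam 1)
            + 4 * (αbar / K)
              * (γ ^ 2 * Lh ^ 2 * ‖x 1 - x 0‖ ^ 2 + ‖z 1 - z 0‖ ^ 2) - Estar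
            + 16 * γ ^ 2 * Lghat ^ 2 * αbar) / (γ * η / 4 * (1 - η / 2)))
        / Real.sqrt K := by
  classical
  have hγne : γ ≠ 0 := ne_of_gt hγ0
  have hηne : η ≠ 0 := ne_of_gt hη0
  have hKpos : (0:ℝ) < (K:ℝ) := by exact_mod_cast Nat.lt_of_lt_of_le Nat.zero_lt_one hK
  have h2η : (0:ℝ) < 1 - η/2 := by linarith
  set Am := Matrix.toEuclideanLin A with hAm
  set At := Matrix.toEuclideanLin A.transpose with hAt
  set c := γ * η / 4 * (1 - η / 2) with hcdef
  have hc : 0 < c := by rw [hcdef]; exact mul_pos (by positivity) h2η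
  set ab := αbar / (K:ℝ) with habdef
  have hab0 : 0 < ab := div_pos hαbar0 hKpos
  have habK : ab ≤ αbar := by
    rw [habdef]; exact div_le_self hαbar0.le (by exact_mod_cast hK)
  set Et : ℕ → ℝ := fun k => Pfun (fun a => h a + g a) A b γ (β k) (x k) (z k) (lam k)
      + 4 * ab * (γ ^ 2 * Lh ^ 2 * ‖x k - x (k - 1)‖ ^ 2 + ‖z k - z (k - 1)‖ ^ 2)
    with hEtdef
  have hEt' : ∀ k, 1 ≤ k → k ≤ K + 1 → Estar ≤ Et k := by
    intro k h1 h2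
    simpa only [hEtdef] using hEt k h1 h2
  obtain ⟨x0, hx0⟩ := hb
  -- scalar coefficient conditions
  have hm1 : αbar ≤ (1 - γ * (ρg + Lh) - η * (1 - η / 2) * γ ^ 2 * Lh ^ 2)
      / (8 * γ * (1 + γ ^ 2 * Lh ^ 2)) := le_trans hαbar (min_le_left _ _)
  have hD1 : (0:ℝ) < 8 * γ * (1 + γ ^ 2 * Lh ^ 2) := by positivity
  have key1 : ab * (8 * γ * (1 + γ ^ 2 * Lh ^ 2))
      ≤ 1 - γ * (ρg + Lh) - η * (1 - η / 2) * γ ^ 2 * Lh ^ 2 :=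
    le_trans (mul_le_mul_of_nonneg_right habK hD1.le) ((le_div_iff₀ hD1).mp hm1)
  have cond1 : 2*c*Lh^2 + 4*ab*(1 + γ^2*Lh^2) ≤ (1/γ - ρg - Lh)/2 := by
    rw [← sub_nonneg]
    have e : (1/γ - ρg - Lh)/2 - (2*c*Lh^2 + 4*ab*(1 + γ^2*Lh^2)) =
        ((1 - γ * (ρg + Lh) - η * (1 - η / 2) * γ ^ 2 * Lh ^ 2)
          - ab * (8 * γ * (1 + γ ^ 2 * Lh ^ 2)))/(2*γ) := by
      rw [hcdef]; field_simp; ring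
    rw [e]
    exact div_nonneg (by linarith) (by positivity)
  have hm2 : αbar ≤ 1 / (16 * γ) * (2 / η - 1) := le_trans hαbar (min_le_right _ _)
  have e2m : 1 / (16 * γ) * (2 / η - 1) = (2 - η)/(16*γ*η) := by field_simp
  have key2 : ab * (16*γ*η) ≤ 2 - η := by
    rw [e2m] at hm2
    exact le_trans (mul_le_mul_of_nonneg_right habK (by positivity))
      ((le_div_iff₀ (by positivity)).mp hm2)
  have cond2 : 2*c*(γ⁻¹)^2 + 4*ab*η^2 ≤ η*(2-η)/(2*γ) := by
    rw [← sub_nonneg]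
    have e : η*(2-η)/(2*γ) - (2*c*(γ⁻¹)^2 + 4*ab*η^2)
        = η*((2-η) - ab*(16*γ*η))/(4*γ) := by
      rw [hcdef]; field_simp; ring
    rw [e]
    exact div_nonneg (mul_nonneg hη0.le (by linarith)) (by positivity)
  have condc : c ≤ γ*η*(1-η/2)/2 := by
    rw [hcdef]; nlinarith [mul_pos (mul_pos hγ0 hη0) h2η]
  -- The one-step descent estimate
  have key : ∀ j : ℕ,
      c * (‖γ⁻¹ • (z (j+1) - x (j+1+1)) + h' (x (j+1+1)) - h' (x (j+1))‖ ^ 2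
        + (β (j+1) ^ 2)⁻¹ * ‖lam (j+1+1) - lam (j+1)‖ ^ 2) + Et (j+1+1)
      ≤ Et (j+1) + 16*γ^2*Lghat^2*ab := by
    intro j
    -- strong convexity of the x-subproblem
    set F : EuclideanSpace ℝ (Fin n) → ℝ := fun x' =>
      h (x (j+1)) + ⟪h' (x (j+1)), x' - x (j+1)⟫ + g x'
        + ⟪lam (j+1), Am x' - b⟫
        + β (j+1) / 2 * ‖Am x' - b‖ ^ 2
        + 1 / (2 * γ) * ‖x' - z (j+1)‖ ^ 2 with hFdef
    have hminF : ∀ y, F (x (j+1+1)) ≤ F y := by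
      intro y; simp only [hFdef]; exact hxmin (j+1) y
    have hcombo : ∀ (y : EuclideanSpace ℝ (Fin n)) (θ : ℝ), 0 ≤ θ → θ ≤ 1 →
        F ((1-θ) • x (j+1+1) + θ • y) ≤ (1-θ)*F (x (j+1+1)) + θ*F y
          - θ*(1-θ)*((1/γ - ρg)/2)*‖x (j+1+1) - y‖^2 := by
      intro y θ hθ0 hθ1
      have h1θ : (0:ℝ) ≤ 1 - θ := by linarith
      simp only [hFdef]
      have p1 : ⟪h' (x (j+1)), ((1-θ) • x (j+1+1) + θ • y) - x (j+1)⟫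
          = (1-θ)*⟪h' (x (j+1)), x (j+1+1) - x (j+1)⟫ + θ*⟪h' (x (j+1)), y - x (j+1)⟫ := by
        have e : ((1-θ) • x (j+1+1) + θ • y) - x (j+1)
            = (1-θ) • (x (j+1+1) - x (j+1)) + θ • (y - x (j+1)) := by module
        rw [e, inner_add_right, real_inner_smul_right, real_inner_smul_right]
      have p2 : g ((1-θ) • x (j+1+1) + θ • y)
          ≤ (1-θ)*g (x (j+1+1)) + θ*g y + θ*(1-θ)*(ρg/2)*‖x (j+1+1) - y‖^2 := by
        have hg := hwc.2 (Set.mem_univ (x (j+1+1))) (Set.mem_univ y) h1θ hθ0 (by ring)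
        simp only [smul_eq_mul] at hg
        have e2 : ρg / 2 * ‖(1-θ) • x (j+1+1) + θ • y‖^2
            = ρg / 2 * ((1-θ)*‖x (j+1+1)‖^2 + θ*‖y‖^2 - θ*(1-θ)*‖x (j+1+1) - y‖^2) := by
          rw [norm_combo_sq]
        linarith [hg, e2]
      have p3 : ⟪lam (j+1), Am ((1-θ) • x (j+1+1) + θ • y) - b⟫
          = (1-θ)*⟪lam (j+1), Am (x (j+1+1)) - b⟫ + θ*⟪lam (j+1), Am y - b⟫ := by
        have e : Am ((1-θ) • x (j+1+1) + θ • y) - b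
            = (1-θ) • (Am (x (j+1+1)) - b) + θ • (Am y - b) := by
          rw [map_add, map_smul, map_smul]; module
        rw [e, inner_add_right, real_inner_smul_right, real_inner_smul_right]
      have p4 : β (j+1) / 2 * ‖Am ((1-θ) • x (j+1+1) + θ • y) - b‖^2
          ≤ (1-θ)*(β (j+1) / 2 * ‖Am (x (j+1+1)) - b‖^2)
            + θ*(β (j+1) / 2 * ‖Am y - b‖^2) := by
        have e : Am ((1-θ) • x (j+1+1) + θ • y) - b
            = (1-θ) • (Am (x (j+1+1)) - b) + θ • (Am y - b) := by
          rw [map_add, map_smul, map_smul]; module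
        rw [e, norm_combo_sq]
        have hnn : 0 ≤ β (j+1) * (θ*(1-θ)*‖(Am (x (j+1+1)) - b) - (Am y - b)‖^2) :=
          mul_nonneg (hβ (j+1)).le
            (mul_nonneg (mul_nonneg hθ0 h1θ) (sq_nonneg _))
        linarith [hnn]
      have p5 : 1 / (2 * γ) * ‖((1-θ) • x (j+1+1) + θ • y) - z (j+1)‖^2
          = (1-θ)*(1 / (2 * γ) * ‖x (j+1+1) - z (j+1)‖^2)
            + θ*(1 / (2 * γ) * ‖y - z (j+1)‖^2)
            - θ*(1-θ)*(1/(2*γ))*‖x (j+1+1) - y‖^2 := by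
        have e : ((1-θ) • x (j+1+1) + θ • y) - z (j+1)
            = (1-θ) • (x (j+1+1) - z (j+1)) + θ • (y - z (j+1)) := by module
        rw [e, norm_combo_sq,
          show (x (j+1+1) - z (j+1)) - (y - z (j+1)) = x (j+1+1) - y by module]
        ring
      have hbr : θ*(1-θ)*(1/(2*γ))*‖x (j+1+1) - y‖^2
          = θ*(1-θ)*((1/γ - ρg)/2)*‖x (j+1+1) - y‖^2
            + θ*(1-θ)*(ρg/2)*‖x (j+1+1) - y‖^2 := by ring
      linarith [p1, p2, p3, p4, p5, hbr]
    have hsc := min_strong hminF hcombo (x (j+1))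
    have hdesc := descent_lemma hh' hLh (x (j+1)) (x (j+1+1))
    have hA : Pfun (fun a => h a + g a) A b γ (β (j+1)) (x (j+1+1)) (z (j+1)) (lam (j+1))
        ≤ Pfun (fun a => h a + g a) A b γ (β (j+1)) (x (j+1)) (z (j+1)) (lam (j+1))
          - ((1/γ - ρg - Lh)/2) * ‖x (j+1+1) - x (j+1)‖^2 := by
      simp only [hFdef] at hsc
      have hz0 : ⟪h' (x (j+1)), x (j+1) - x (j+1)⟫ = (0:ℝ) := by simp
      rw [show ‖x (j+1) - x (j+1+1)‖ = ‖x (j+1+1) - x (j+1)‖ from norm_sub_rev _ _] at hsc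
      simp only [Pfun, ← hAm]
      linarith [hsc, hdesc, hz0]
    -- change of λ, β, z
    have e1 : ⟪lam (j+1+1), Am (x (j+1+1)) - b⟫
        = ⟪lam (j+1), Am (x (j+1+1)) - b⟫ + β (j+1)*‖Am (x (j+1+1)) - b‖^2 := by
      rw [hlam (j+1), inner_add_left, real_inner_smul_left, real_inner_self_eq_norm_sq]
    have e2v : x (j+1+1) - z (j+1+1) = (1-η) • (x (j+1+1) - z (j+1)) := by
      rw [hz (j+1)]; module
    have e2 : 1/(2*γ) * ‖x (j+1+1) - z (j+1+1)‖^2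
        = 1/(2*γ) * ((1-η)^2 * ‖x (j+1+1) - z (j+1)‖^2) := by
      rw [e2v, norm_smul, Real.norm_eq_abs, mul_pow, sq_abs]
    have hBC : Pfun (fun a => h a + g a) A b γ (β (j+1+1)) (x (j+1+1)) (z (j+1+1)) (lam (j+1+1))
        = Pfun (fun a => h a + g a) A b γ (β (j+1)) (x (j+1+1)) (z (j+1)) (lam (j+1))
          + ((β (j+1) + β (j+1+1))/2)*‖Am (x (j+1+1)) - b‖^2
          - (η*(2-η)/(2*γ))*‖x (j+1+1) - z (j+1)‖^2 := by
      simp only [Pfun, ← hAm]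
      linear_combination e1 + e2
    -- the dual bound
    have hrange : lam (j+1+1) - lam (j+1) ∈ LinearMap.range Am := by
      refine LinearMap.mem_range.mpr ⟨β (j+1) • (x (j+1+1) - x0), ?_⟩
      rw [map_smul, map_sub, hx0, hlam (j+1)]
      abel
    have hσdl := hσA _ hrange
    have hMk := hbnd (z (j+1) - γ • (h' (x (j+1)) + At (lam (j+1+1))))
    rw [← hprox (j+1)] at hMk
    have hMj := hbnd (z j - γ • (h' (x j) + At (lam (j+1))))
    rw [← hprox j] at hMj
    have keyid : γ • At (lam (j+1+1) - lam (j+1)) =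
        ((z (j+1) - z j) + (-(x (j+1+1) - x (j+1)))) +
        ((-(γ • (h' (x (j+1)) - h' (x j)))) +
          (-(γ • (γ⁻¹ • (z (j+1) - γ • (h' (x (j+1)) + At (lam (j+1+1))) - x (j+1+1)))
            - γ • (γ⁻¹ • (z j - γ • (h' (x j) + At (lam (j+1))) - x (j+1)))))) := by
      rw [map_sub, smul_sub, smul_inv_smul₀ hγne, smul_inv_smul₀ hγne, smul_sub,
        smul_add, smul_add]
      abel
    have hb2 := normsq_add_le (z (j+1) - z j) (-(x (j+1+1) - x (j+1)))
    have hb3 := normsq_add_le (-(γ • (h' (x (j+1)) - h' (x j))))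
      (-(γ • (γ⁻¹ • (z (j+1) - γ • (h' (x (j+1)) + At (lam (j+1+1))) - x (j+1+1)))
        - γ • (γ⁻¹ • (z j - γ • (h' (x j) + At (lam (j+1))) - x (j+1)))))
    have hb1 := normsq_add_le ((z (j+1) - z j) + (-(x (j+1+1) - x (j+1))))
      ((-(γ • (h' (x (j+1)) - h' (x j)))) +
        (-(γ • (γ⁻¹ • (z (j+1) - γ • (h' (x (j+1)) + At (lam (j+1+1))) - x (j+1+1)))
          - γ • (γ⁻¹ • (z j - γ • (h' (x j) + At (lam (j+1))) - x (j+1))))))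
    simp only [norm_neg] at hb1 hb2 hb3
    have hLhsq : ‖h' (x (j+1)) - h' (x j)‖^2 ≤ Lh^2*‖x (j+1) - x j‖^2 := by
      have h0 := pow_le_pow_left₀ (norm_nonneg _) (hLh (x (j+1)) (x j)) 2
      linarith [h0]
    have bound1 : ‖γ • (h' (x (j+1)) - h' (x j))‖^2 ≤ γ^2*Lh^2*‖x (j+1) - x j‖^2 := by
      rw [norm_smul, Real.norm_eq_abs, mul_pow, sq_abs]
      have h0 := mul_le_mul_of_nonneg_left hLhsq (sq_nonneg γ)
      linarith [h0]
    have n1 : ‖γ • (γ⁻¹ • (z (j+1) - γ • (h' (x (j+1)) + At (lam (j+1+1))) - x (j+1+1)))‖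
        ≤ γ * Lghat := by
      rw [norm_smul, Real.norm_eq_abs, abs_of_pos hγ0]
      exact mul_le_mul_of_nonneg_left hMk hγ0.le
    have n2 : ‖γ • (γ⁻¹ • (z j - γ • (h' (x j) + At (lam (j+1))) - x (j+1)))‖
        ≤ γ * Lghat := by
      rw [norm_smul, Real.norm_eq_abs, abs_of_pos hγ0]
      exact mul_le_mul_of_nonneg_left hMj hγ0.le
    have bound2 : ‖γ • (γ⁻¹ • (z (j+1) - γ • (h' (x (j+1)) + At (lam (j+1+1))) - x (j+1+1)))
        - γ • (γ⁻¹ • (z j - γ • (h' (x j) + At (lam (j+1))) - x (j+1)))‖^2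
        ≤ 4*γ^2*Lghat^2 := by
      have hns := norm_sub_le
        (γ • (γ⁻¹ • (z (j+1) - γ • (h' (x (j+1)) + At (lam (j+1+1))) - x (j+1+1))))
        (γ • (γ⁻¹ • (z j - γ • (h' (x j) + At (lam (j+1))) - x (j+1))))
      have h4 : ‖γ • (γ⁻¹ • (z (j+1) - γ • (h' (x (j+1)) + At (lam (j+1+1))) - x (j+1+1)))
          - γ • (γ⁻¹ • (z j - γ • (h' (x j) + At (lam (j+1))) - x (j+1)))‖
          ≤ 2*(γ*Lghat) := by linarith [hns, n1, n2]
      have h5 := pow_le_pow_left₀ (norm_nonneg _) h4 2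
      linarith [h5]
    have hfour : ‖γ • At (lam (j+1+1) - lam (j+1))‖^2
        ≤ 4*‖z (j+1) - z j‖^2 + 4*‖x (j+1+1) - x (j+1)‖^2
          + 4*(γ^2*Lh^2*‖x (j+1) - x j‖^2) + 16*γ^2*Lghat^2 := by
      rw [keyid]
      linarith [hb1, hb2, hb3, bound1, bound2]
    have hsm : ‖γ • At (lam (j+1+1) - lam (j+1))‖^2
        = γ^2 * ‖At (lam (j+1+1) - lam (j+1))‖^2 := by
      rw [norm_smul, Real.norm_eq_abs, mul_pow, sq_abs]
    have hD : γ^2*(σ*‖lam (j+1+1) - lam (j+1)‖^2)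
        ≤ 4*‖z (j+1) - z j‖^2 + 4*‖x (j+1+1) - x (j+1)‖^2
          + 4*(γ^2*Lh^2*‖x (j+1) - x j‖^2) + 16*γ^2*Lghat^2 := by
      have := mul_le_mul_of_nonneg_left hσdl (sq_nonneg γ)
      linarith [hsm, hfour]
    have t4 := mul_le_mul_of_nonneg_left hD hab0.le
    have hdl2 : ‖lam (j+1+1) - lam (j+1)‖^2 = β (j+1)^2*‖Am (x (j+1+1)) - b‖^2 := by
      rw [hlam (j+1), add_sub_cancel_left, norm_smul, Real.norm_eq_abs, mul_pow, sq_abs]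
    have hdl2m : ab*(γ^2*(σ*‖lam (j+1+1) - lam (j+1)‖^2))
        = ab*(γ^2*(σ*(β (j+1)^2*‖Am (x (j+1+1)) - b‖^2))) := by rw [hdl2]
    have hdl2g : (β (j+1)^2)⁻¹*‖lam (j+1+1) - lam (j+1)‖^2 = ‖Am (x (j+1+1)) - b‖^2 := by
      have hbne : β (j+1) ≠ 0 := (hβ (j+1)).ne'
      rw [hdl2]
      field_simp
    have hcoef : β (j+1) + β (j+1+1) + γ*η*(1-η/2) = ab*(2*(γ^2*σ)*β (j+1)^2) := by
      have h0 := hαk (j+1)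
      rwa [div_eq_iff (mul_pos (mul_pos two_pos (mul_pos (pow_pos hγ0 2) hσ))
        (pow_pos (hβ (j+1)) 2)).ne'] at h0
    have t3 : c + (β (j+1) + β (j+1+1))/2 ≤ ab*(γ^2*σ)*β (j+1)^2 := by
      linarith [hcoef, condc]
    have t3' := mul_le_mul_of_nonneg_right t3 (sq_nonneg ‖Am (x (j+1+1)) - b‖)
    have hv : ‖γ⁻¹ • (z (j+1) - x (j+1+1)) + h' (x (j+1+1)) - h' (x (j+1))‖^2
        ≤ 2*(γ⁻¹)^2*‖x (j+1+1) - z (j+1)‖^2 + 2*Lh^2*‖x (j+1+1) - x (j+1)‖^2 := by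
      have e : γ⁻¹ • (z (j+1) - x (j+1+1)) + h' (x (j+1+1)) - h' (x (j+1))
          = γ⁻¹ • (z (j+1) - x (j+1+1)) + (h' (x (j+1+1)) - h' (x (j+1))) := by abel
      rw [e]
      have h1 := normsq_add_le (γ⁻¹ • (z (j+1) - x (j+1+1))) (h' (x (j+1+1)) - h' (x (j+1)))
      have h2 : ‖γ⁻¹ • (z (j+1) - x (j+1+1))‖^2 = (γ⁻¹)^2*‖x (j+1+1) - z (j+1)‖^2 := by
        rw [norm_smul, Real.norm_eq_abs, mul_pow, sq_abs, norm_sub_rev]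
      have h3 : ‖h' (x (j+1+1)) - h' (x (j+1))‖^2 ≤ Lh^2*‖x (j+1+1) - x (j+1)‖^2 := by
        have h0 := pow_le_pow_left₀ (norm_nonneg _) (hLh (x (j+1+1)) (x (j+1))) 2
        linarith [h0]
      linarith
    have t5 := mul_le_mul_of_nonneg_left hv hc.le
    have t1 := mul_le_mul_of_nonneg_right cond1 (sq_nonneg ‖x (j+1+1) - x (j+1)‖)
    have t2 := mul_le_mul_of_nonneg_right cond2 (sq_nonneg ‖x (j+1+1) - z (j+1)‖)
    have hdznorm : ‖z (j+1+1) - z (j+1)‖^2 = η^2*‖x (j+1+1) - z (j+1)‖^2 := by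
      rw [show z (j+1+1) - z (j+1) = η • (x (j+1+1) - z (j+1)) by rw [hz (j+1)]; module,
        norm_smul, Real.norm_eq_abs, mul_pow, sq_abs]
    have hdznorm' : 4*ab*‖z (j+1+1) - z (j+1)‖^2
        = 4*ab*(η^2*‖x (j+1+1) - z (j+1)‖^2) := by rw [hdznorm]
    simp only [hEtdef, Nat.add_sub_cancel]
    rw [hdl2g]
    linarith [hA, hBC, t1, t2, t3', t4, t5, hdl2m, hdznorm']
  -- telescoping
  set Gsq : ℕ → ℝ := fun t =>
      ‖γ⁻¹ • (z t - x (t + 1)) + h' (x (t + 1)) - h' (x t)‖ ^ 2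
        + (β t ^ 2)⁻¹ * ‖lam (t + 1) - lam t‖ ^ 2 with hGsq
  have tele : ∀ N : ℕ, ∑ j ∈ Finset.range N, (c * Gsq (j+1))
      ≤ Et 1 - Et (N+1) + N*(16*γ^2*Lghat^2*ab) := by
    intro N
    induction N with
    | zero => simp
    | succ N ih =>
      rw [Finset.sum_range_succ]
      have hk := key N
      simp only [hGsq]
      simp only [hGsq] at ih
      push_cast
      linarith
  have hEK1 : Estar ≤ Et (K+1) := hEt' (K+1) (by omega) (le_refl _)
  have herr : (K:ℝ)*(16*γ^2*Lghat^2*ab) = 16*γ^2*Lghat^2*αbar := by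
    rw [habdef]; field_simp
  obtain ⟨j, hjK, hjle⟩ : ∃ j, j < K ∧
      (K:ℝ) * (c * Gsq (j+1)) ≤ Et 1 - Estar + 16*γ^2*Lghat^2*αbar := by
    by_contra hcon
    push_neg at hcon
    have hsum : (K:ℝ) * (Et 1 - Estar + 16*γ^2*Lghat^2*αbar)
        < ∑ j ∈ Finset.range K, (K:ℝ) * (c * Gsq (j+1)) := by
      have := Finset.sum_lt_sum_of_nonempty
        (s := Finset.range K)
        (f := fun _ => Et 1 - Estar + 16*γ^2*Lghat^2*αbar)
        (g := fun j => (K:ℝ) * (c * Gsq (j+1)))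
        ⟨0, Finset.mem_range.mpr (by omega)⟩
        (fun j hj => hcon j (Finset.mem_range.mp hj))
      rw [Finset.sum_const, Finset.card_range, nsmul_eq_mul] at this
      exact this
    have heqs : ∑ j ∈ Finset.range K, (K:ℝ) * (c * Gsq (j+1))
        = (K:ℝ) * ∑ j ∈ Finset.range K, (c * Gsq (j+1)) := (Finset.mul_sum _ _ _).symm
    have hK1 := mul_le_mul_of_nonneg_left (tele K) hKpos.le
    have hEKK := mul_le_mul_of_nonneg_left hEK1 hKpos.le
    have herrK : (K:ℝ) * (Et 1 - Et (K+1) + (K:ℝ)*(16*γ^2*Lghat^2*ab))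
        = (K:ℝ) * (Et 1 - Et (K+1)) + (K:ℝ)*(16*γ^2*Lghat^2*αbar) := by
      rw [mul_add, herr]
    linarith [hsum, heqs, hK1, hEKK, herrK]
  have hGle : Gsq (j+1) ≤ ((Et 1 - Estar + 16*γ^2*Lghat^2*αbar)/c)/(K:ℝ) := by
    rw [div_div, le_div_iff₀ (by positivity)]
    linarith [hjle]
  have hNum0 : 0 ≤ Et 1 - Estar + 16*γ^2*Lghat^2*αbar := by
    have h1 := hEt' 1 (le_refl 1) (by omega)
    have h2 : (0:ℝ) ≤ 16*γ^2*Lghat^2*αbar := by positivity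
    linarith
  have hEt1 : Et 1 = Pfun (fun a => h a + g a) A b γ (β 1) (x 1) (z 1) (lam 1)
      + 4 * ab * (γ ^ 2 * Lh ^ 2 * ‖x 1 - x 0‖ ^ 2 + ‖z 1 - z 0‖ ^ 2) := by
    simp only [hEtdef]
  rw [show (Pfun (fun a => h a + g a) A b γ (β 1) (x 1) (z 1) (lam 1)
      + 4 * ab * (γ ^ 2 * Lh ^ 2 * ‖x 1 - x 0‖ ^ 2 + ‖z 1 - z 0‖ ^ 2)) = Et 1 from hEt1.symm]
  calc sInf ((fun t => Real.sqrt
          (‖γ⁻¹ • (z t - x (t + 1)) + h' (x (t + 1)) - h' (x t)‖ ^ 2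
            + (β t ^ 2)⁻¹ * ‖lam (t + 1) - lam t‖ ^ 2)) '' Set.Icc 1 K)
      ≤ Real.sqrt (Gsq (j+1)) := by
        apply csInf_le
        · refine ⟨0, ?_⟩
          rintro v ⟨t, -, rfl⟩
          exact Real.sqrt_nonneg _
        · exact ⟨j+1, ⟨by omega, by omega⟩, by simp only [hGsq]⟩
    _ ≤ Real.sqrt (((Et 1 - Estar + 16*γ^2*Lghat^2*αbar)/c)/(K:ℝ)) :=
        Real.sqrt_le_sqrt hGle
    _ = Real.sqrt ((Et 1 - Estar + 16*γ^2*Lghat^2*αbar)/c) / Real.sqrt (K:ℝ) :=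
        Real.sqrt_div (div_nonneg hNum0 hc.le) _
end

section
/- Let f : ℝ^n → ℝ be lower semicontinuous and ρ-weakly convex with the implicit Lipschitz subgradient property with constant L_f > 0, let γ ∈ (0, 1/ρ), η ∈ (0, 2), and let β > 0 be a fixed penalty parameter. Assume b lies in the column space of A and σ̃ > 0 satisfies ‖Aᵀv‖² ≥ σ̃‖v‖² for every v in the column space of A; set c_{γ,A} := γ²σ̃, α := (2β + γη(1 − η/2))/(2c_{γ,A}β²), and a := γη(2 − η)/(4β). Let (x^k, z^k, λ^k) be MEAL iterates with constant penalty β_k = β and step size η, and define P_meal^k := P_β(x^k, z^k, λ^k) + 3α‖z^k − z^{k−1}‖² for k ≥ 1. Then for every k ≥ 1: P_meal^k − P_meal^{k+1} ≥ ((1 − ργ)/(2γ) − 2α(γL_f + 1)²)‖x^{k+1} − x^k‖² + ((1/(2γ))(2/η − 1) − 3α)‖z^{k+1} − z^k‖² + α‖z^k − z^{k−1}‖² + (a/β)‖λ^{k+1} − λ^k‖². -/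
open scoped RealInnerProductSpace

private lemma expand_sq {N : ℕ} (u v : EuclideanSpace ℝ (Fin N)) (t : ℝ) :
    ‖u + t • v‖ ^ 2 = ‖u‖ ^ 2 + 2 * t * ⟪u, v⟫ + t ^ 2 * ‖v‖ ^ 2 := by
  rw [norm_add_sq_real, real_inner_smul_right, norm_smul, mul_pow, Real.norm_eq_abs, sq_abs]
  ring


private lemma arith (t ρ γ β fp fq fxt A1 A2 B0 B1 B2 C0 C1 C2 D0 D1 : ℝ)
    (ht0 : 0 < t) (ht1 : t < 1) (hβ : 0 ≤ β) (hB2 : 0 ≤ B2)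
    (hmin' : fp + A1 + β/2*B0 + 1/(2*γ)*C0
      ≤ fxt + (A1 + t*A2) + β/2*(B0 + 2*t*B1 + t^2*B2) + 1/(2*γ)*(C0 + 2*t*C1 + t^2*C2))
    (hcv : fxt + ρ/2*(D0 + 2*t*D1 + t^2*C2)
      ≤ (1-t)*(fp + ρ/2*D0) + t*(fq + ρ/2*(D0 + 2*1*D1 + 1^2*C2))) :
    (1-t)*((1/(2*γ) - ρ/2)*C2)
      ≤ (fq + (A1 + 1*A2) + β/2*(B0 + 2*1*B1 + 1^2*B2) + 1/(2*γ)*(C0 + 2*1*C1 + 1^2*C2))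
        - (fp + A1 + β/2*B0 + 1/(2*γ)*C0) := by
  have E3 : t*((1-t)*(β/2*B2 + (1/(2*γ) - ρ/2)*C2))
      ≤ t*(fq - fp + A2 + β/2*(2*B1 + B2) + 1/(2*γ)*(2*C1 + C2)) := by
    nlinarith [hmin', hcv]
  have E4 := (mul_le_mul_iff_right₀ ht0).mp E3
  have hB : 0 ≤ (1-t)*(β/2*B2) :=
    mul_nonneg (by linarith) (mul_nonneg (by linarith) hB2)
  nlinarith [E4, hB]

private lemma xdescent {n m : ℕ} (f : EuclideanSpace ℝ (Fin n) → ℝ)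
    (A : Matrix (Fin m) (Fin n) ℝ) (b : EuclideanSpace ℝ (Fin m)) (ρ γ β : ℝ)
    (z p : EuclideanSpace ℝ (Fin n)) (lam : EuclideanSpace ℝ (Fin m))
    (hβ : 0 ≤ β)
    (hwc : ConvexOn ℝ Set.univ fun x => f x + ρ / 2 * ‖x‖ ^ 2)
    (hmin : ∀ x', Pfun f A b γ β p z lam ≤ Pfun f A b γ β x' z lam)
    (q : EuclideanSpace ℝ (Fin n)) :
    (1 / (2 * γ) - ρ / 2) * ‖q - p‖ ^ 2
      ≤ Pfun f A b γ β q z lam - Pfun f A b γ β p z lam := by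
  set T := Matrix.toEuclideanLin A with hT
  have key : ∀ t : ℝ, t ∈ Set.Ioo (0:ℝ) 1 →
      (1 - t) * ((1 / (2 * γ) - ρ / 2) * ‖q - p‖ ^ 2)
        ≤ Pfun f A b γ β q z lam - Pfun f A b γ β p z lam := by
    intro t ht
    obtain ⟨ht0, ht1⟩ := ht
    set d := q - p with hd
    set xt := p + t • d with hxt
    have Hp : Pfun f A b γ β p z lam
        = f p + ⟪lam, T p - b⟫ + β / 2 * ‖T p - b‖ ^ 2 + 1 / (2 * γ) * ‖p - z‖ ^ 2 := by
      simp only [Pfun, ← hT]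
    have Hq : Pfun f A b γ β q z lam
        = f q + (⟪lam, T p - b⟫ + 1 * ⟪lam, T d⟫)
          + β / 2 * (‖T p - b‖ ^ 2 + 2 * 1 * ⟪T p - b, T d⟫ + 1 ^ 2 * ‖T d‖ ^ 2)
          + 1 / (2 * γ) * (‖p - z‖ ^ 2 + 2 * 1 * ⟪p - z, d⟫ + 1 ^ 2 * ‖d‖ ^ 2) := by
      have e3 : T q - b = (T p - b) + (1:ℝ) • (T d) := by
        rw [hd, map_sub, one_smul]; abel
      have e4 : q - z = (p - z) + (1:ℝ) • d := by rw [hd, one_smul]; abel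
      simp only [Pfun, ← hT]
      rw [e3, e4, expand_sq, expand_sq, inner_add_right, real_inner_smul_right]
    have Ht : Pfun f A b γ β xt z lam
        = f xt + (⟪lam, T p - b⟫ + t * ⟪lam, T d⟫)
          + β / 2 * (‖T p - b‖ ^ 2 + 2 * t * ⟪T p - b, T d⟫ + t ^ 2 * ‖T d‖ ^ 2)
          + 1 / (2 * γ) * (‖p - z‖ ^ 2 + 2 * t * ⟪p - z, d⟫ + t ^ 2 * ‖d‖ ^ 2) := by
      have e1 : T xt - b = (T p - b) + t • (T d) := by
        rw [hxt, map_add, map_smul]; abel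
      have e2 : xt - z = (p - z) + t • d := by rw [hxt]; abel
      simp only [Pfun, ← hT]
      rw [e1, e2, expand_sq, expand_sq, inner_add_right, real_inner_smul_right]
    have hxtc : xt = (1 - t) • p + t • q := by
      rw [hxt, hd, sub_smul, one_smul, smul_sub]; abel
    have hcv := hwc.2 (Set.mem_univ p) (Set.mem_univ q)
      (by linarith : (0:ℝ) ≤ 1 - t) ht0.le (by ring)
    rw [← hxtc] at hcv
    simp only [smul_eq_mul] at hcv
    have hnq : ‖q‖ ^ 2 = ‖p‖ ^ 2 + 2 * 1 * ⟪p, d⟫ + 1 ^ 2 * ‖d‖ ^ 2 := by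
      rw [show q = p + (1:ℝ) • d by rw [hd, one_smul]; abel, expand_sq]
    have hnxt : ‖xt‖ ^ 2 = ‖p‖ ^ 2 + 2 * t * ⟪p, d⟫ + t ^ 2 * ‖d‖ ^ 2 := by
      rw [hxt, expand_sq]
    rw [hnq, hnxt] at hcv
    have hmin' := hmin xt
    rw [Hp, Ht] at hmin'
    rw [Hq, Hp]
    exact arith _ _ _ _ _ _ _ _ _ _ _ _ _ _ _ _ _ ht0 ht1 hβ (sq_nonneg _) hmin' hcv
  have hlim : Filter.Tendsto
      (fun t : ℝ => (1 - t) * ((1 / (2 * γ) - ρ / 2) * ‖q - p‖ ^ 2))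
      (nhdsWithin 0 (Set.Ioi 0))
      (nhds ((1 - 0) * ((1 / (2 * γ) - ρ / 2) * ‖q - p‖ ^ 2))) :=
    (Continuous.tendsto (by continuity) 0).mono_left nhdsWithin_le_nhds
  have hfin := le_of_tendsto hlim (Filter.eventually_of_mem
    (Ioo_mem_nhdsGT_of_mem (Set.left_mem_Ico.2 one_pos)) key)
  linarith [hfin]

private lemma dualarith (γ Lf σ Z X L TN : ℝ) (hγ0 : 0 < γ) (hTN : 0 ≤ TN)
    (hZ0 : 0 ≤ Z) (hX0 : 0 ≤ X)
    (hnormT : TN ≤ γ⁻¹ * Z + γ⁻¹ * X + Lf * X) (hσ2 : σ * L ^ 2 ≤ TN ^ 2) :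
    σ * γ^2 * L ^ 2 ≤ 2 * Z ^ 2 + 2 * (γ*Lf+1)^2 * X ^ 2 := by
  have hg : γ * γ⁻¹ = 1 := mul_inv_cancel₀ (ne_of_gt hγ0)
  have h3 : TN ^ 2 ≤ (γ⁻¹ * Z + (γ⁻¹ + Lf) * X) ^ 2 := by
    calc TN ^ 2 ≤ (γ⁻¹ * Z + γ⁻¹ * X + Lf * X) ^ 2 := by
          exact pow_le_pow_left₀ hTN hnormT 2
      _ = (γ⁻¹ * Z + (γ⁻¹ + Lf) * X) ^ 2 := by ring
  have h4 : (γ⁻¹ * Z + (γ⁻¹ + Lf) * X) ^ 2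
      ≤ 2 * (γ⁻¹ * Z)^2 + 2 * ((γ⁻¹ + Lf) * X)^2 := by
    nlinarith [sq_nonneg (γ⁻¹ * Z - (γ⁻¹ + Lf) * X)]
  have h5 : γ^2 * (σ * L ^ 2) ≤ γ^2 * (2 * (γ⁻¹ * Z)^2 + 2 * ((γ⁻¹ + Lf) * X)^2) :=
    mul_le_mul_of_nonneg_left (le_trans hσ2 (le_trans h3 h4)) (sq_nonneg γ)
  have h6 : γ^2 * (2 * (γ⁻¹ * Z)^2 + 2 * ((γ⁻¹ + Lf) * X)^2)
      = 2 * (γ*γ⁻¹)^2 * Z^2 + 2 * ((γ*γ⁻¹) + γ*Lf)^2 * X^2 := by ring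
  rw [hg] at h6
  nlinarith [h5, h6.le, h6.ge]

set_option maxHeartbeats 2000000 in
/-- Sufficient-descent property of the MEAL Lyapunov function
`P_meal^k = P_β(x^k, z^k, λ^k) + 3α‖z^k − z^{k−1}‖²`. -/
theorem stmt_17 (n m : ℕ) (A : Matrix (Fin m) (Fin n) ℝ) (b : EuclideanSpace ℝ (Fin m))
    (f : EuclideanSpace ℝ (Fin n) → ℝ) (ρ γ η Lf β σ α a : ℝ)
    (hρ : 0 < ρ) (hγ0 : 0 < γ) (hγ : γ < 1 / ρ) (hη0 : 0 < η) (hη2 : η < 2)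
    (hLf : 0 < Lf) (hβ : 0 < β) (hσ : 0 < σ)
    (hlsc : LowerSemicontinuous f)
    (hwc : ConvexOn ℝ Set.univ fun x => f x + ρ / 2 * ‖x‖ ^ 2)
    (prox : EuclideanSpace ℝ (Fin n) → EuclideanSpace ℝ (Fin n))
    (hproxmin : ∀ w x, f (prox w) + 1 / (2 * γ) * ‖prox w - w‖ ^ 2
        ≤ f x + 1 / (2 * γ) * ‖x - w‖ ^ 2)
    (hproxuniq : ∀ w x, (∀ y, f x + 1 / (2 * γ) * ‖x - w‖ ^ 2
        ≤ f y + 1 / (2 * γ) * ‖y - w‖ ^ 2) → x = prox w)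
    (hlip : ∀ w w', ‖γ⁻¹ • (w - prox w) - γ⁻¹ • (w' - prox w')‖
        ≤ Lf * ‖prox w - prox w'‖)
    (hb : b ∈ LinearMap.range (Matrix.toEuclideanLin A))
    (hσA : ∀ v ∈ LinearMap.range (Matrix.toEuclideanLin A),
      σ * ‖v‖ ^ 2 ≤ ‖Matrix.toEuclideanLin A.transpose v‖ ^ 2)
    (hαdef : α = (2 * β + γ * η * (1 - η / 2)) / (2 * (γ ^ 2 * σ) * β ^ 2))
    (hadef : a = γ * η * (2 - η) / (4 * β))
    (x z : ℕ → EuclideanSpace ℝ (Fin n)) (lam : ℕ → EuclideanSpace ℝ (Fin m))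
    (hxmin : ∀ k x', Pfun f A b γ β (x (k + 1)) (z k) (lam k)
        ≤ Pfun f A b γ β x' (z k) (lam k))
    (hz : ∀ k, z (k + 1) = z k - η • (z k - x (k + 1)))
    (hlam : ∀ k, lam (k + 1) = lam k + β • (Matrix.toEuclideanLin A (x (k + 1)) - b))
    (hprox : ∀ k, x (k + 1)
        = prox (z k - γ • Matrix.toEuclideanLin A.transpose (lam (k + 1)))) :
    ∀ k, 1 ≤ k →
      (Pfun f A b γ β (x k) (z k) (lam k) + 3 * α * ‖z k - z (k - 1)‖ ^ 2)
          - (Pfun f A b γ β (x (k + 1)) (z (k + 1)) (lam (k + 1))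
              + 3 * α * ‖z (k + 1) - z k‖ ^ 2)
        ≥ ((1 - ρ * γ) / (2 * γ) - 2 * α * (γ * Lf + 1) ^ 2) * ‖x (k + 1) - x k‖ ^ 2
          + (1 / (2 * γ) * (2 / η - 1) - 3 * α) * ‖z (k + 1) - z k‖ ^ 2
          + α * ‖z k - z (k - 1)‖ ^ 2
          + a / β * ‖lam (k + 1) - lam k‖ ^ 2 := by
  intro k hk
  obtain ⟨j, rfl⟩ : ∃ j, k = j + 1 := ⟨k - 1, (Nat.succ_pred_eq_of_pos hk).symm⟩
  simp only [Nat.add_sub_cancel]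
  have hγne : γ ≠ 0 := ne_of_gt hγ0
  have hβne : β ≠ 0 := ne_of_gt hβ
  have hηne : η ≠ 0 := ne_of_gt hη0
  -- Step 1 : x-descent
  have D1 := xdescent f A b ρ γ β (z (j+1)) (x (j+1+1)) (lam (j+1)) hβ.le hwc
    (hxmin (j+1)) (x (j+1))
  rw [norm_sub_rev] at D1
  -- Step 2 : dual ascent identity
  have hlamd : lam (j+1+1) - lam (j+1) = β • (Matrix.toEuclideanLin A (x (j+1+1)) - b) := by
    rw [hlam (j+1)]; exact add_sub_cancel_left _ _
  have EL : ‖lam (j+1+1) - lam (j+1)‖ ^ 2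
      = β ^ 2 * ‖Matrix.toEuclideanLin A (x (j+1+1)) - b‖ ^ 2 := by
    rw [hlamd, norm_smul, mul_pow, Real.norm_eq_abs, sq_abs]
  have D2 : Pfun f A b γ β (x (j+1+1)) (z (j+1)) (lam (j+1))
      - Pfun f A b γ β (x (j+1+1)) (z (j+1)) (lam (j+1+1))
      = -(1/β) * ‖lam (j+1+1) - lam (j+1)‖ ^ 2 := by
    have hi : ⟪lam (j+1+1), Matrix.toEuclideanLin A (x (j+1+1)) - b⟫
        = ⟪lam (j+1), Matrix.toEuclideanLin A (x (j+1+1)) - b⟫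
          + β * ‖Matrix.toEuclideanLin A (x (j+1+1)) - b‖ ^ 2 := by
      rw [hlam (j+1), inner_add_left, real_inner_smul_left, real_inner_self_eq_norm_sq]
    simp only [Pfun]
    rw [hi, EL]
    field_simp
    ring
  -- Step 3 : z-step identity
  have hzd : z (j+1+1) - z (j+1) = η • (x (j+1+1) - z (j+1)) := by
    rw [hz (j+1)]; simp only [smul_sub]; abel
  have hpz : x (j+1+1) - z (j+1+1) = (1 - η) • (x (j+1+1) - z (j+1)) := by
    rw [hz (j+1), sub_smul, one_smul]; simp only [smul_sub]; abel
  have EZn : ‖z (j+1+1) - z (j+1)‖ ^ 2 = η ^ 2 * ‖x (j+1+1) - z (j+1)‖ ^ 2 := by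
    rw [hzd, norm_smul, mul_pow, Real.norm_eq_abs, sq_abs]
  have EXZ : ‖x (j+1+1) - z (j+1+1)‖ ^ 2 = (1-η) ^ 2 * ‖x (j+1+1) - z (j+1)‖ ^ 2 := by
    rw [hpz, norm_smul, mul_pow, Real.norm_eq_abs, sq_abs]
  have D3 : Pfun f A b γ β (x (j+1+1)) (z (j+1)) (lam (j+1+1))
      - Pfun f A b γ β (x (j+1+1)) (z (j+1+1)) (lam (j+1+1))
      = 1/(2*γ) * (2/η - 1) * ‖z (j+1+1) - z (j+1)‖ ^ 2 := by
    simp only [Pfun]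
    rw [EXZ, EZn]
    field_simp
    ring
  -- Step 4 : dual bound
  have hlipk := hlip (z (j+1) - γ • Matrix.toEuclideanLin A.transpose (lam (j+1+1)))
    (z j - γ • Matrix.toEuclideanLin A.transpose (lam (j+1)))
  rw [← hprox (j+1), ← hprox j] at hlipk
  have h1 : γ⁻¹ • (γ • (Matrix.toEuclideanLin A.transpose (lam (j+1+1))))
      = Matrix.toEuclideanLin A.transpose (lam (j+1+1)) := by
    rw [smul_smul, inv_mul_cancel₀ hγne, one_smul]
  have h2 : γ⁻¹ • (γ • (Matrix.toEuclideanLin A.transpose (lam (j+1))))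
      = Matrix.toEuclideanLin A.transpose (lam (j+1)) := by
    rw [smul_smul, inv_mul_cancel₀ hγne, one_smul]
  have hTeq : Matrix.toEuclideanLin A.transpose (lam (j+1+1) - lam (j+1))
      = (γ⁻¹ • (z (j+1) - z j) - γ⁻¹ • (x (j+1+1) - x (j+1)))
        - (γ⁻¹ • (z (j+1) - γ • Matrix.toEuclideanLin A.transpose (lam (j+1+1)) - x (j+1+1))
          - γ⁻¹ • (z j - γ • Matrix.toEuclideanLin A.transpose (lam (j+1)) - x (j+1))) := by
    rw [map_sub]
    simp only [smul_sub]
    rw [h1, h2]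
    abel
  have hnormT : ‖Matrix.toEuclideanLin A.transpose (lam (j+1+1) - lam (j+1))‖
      ≤ γ⁻¹ * ‖z (j+1) - z j‖ + γ⁻¹ * ‖x (j+1+1) - x (j+1)‖ + Lf * ‖x (j+1+1) - x (j+1)‖ := by
    rw [hTeq]
    refine le_trans (norm_sub_le _ _) ?_
    have n1 : ‖γ⁻¹ • (z (j+1) - z j) - γ⁻¹ • (x (j+1+1) - x (j+1))‖
        ≤ γ⁻¹ * ‖z (j+1) - z j‖ + γ⁻¹ * ‖x (j+1+1) - x (j+1)‖ := by
      refine le_trans (norm_sub_le _ _) ?_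
      rw [norm_smul, norm_smul, Real.norm_eq_abs, abs_of_pos (inv_pos.2 hγ0)]
    linarith [hlipk, n1]
  obtain ⟨u, hu⟩ := hb
  have hmem : lam (j+1+1) - lam (j+1) ∈ LinearMap.range (Matrix.toEuclideanLin A) := by
    refine ⟨β • (x (j+1+1) - u), ?_⟩
    rw [map_smul, map_sub, hu, ← hlamd]
  have hσ2 := hσA _ hmem
  have hdual : σ * γ^2 * ‖lam (j+1+1) - lam (j+1)‖ ^ 2
      ≤ 2 * ‖z (j+1) - z j‖ ^ 2 + 2 * (γ*Lf+1)^2 * ‖x (j+1+1) - x (j+1)‖ ^ 2 :=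
    dualarith γ Lf σ _ _ _ _ hγ0 (norm_nonneg _) (norm_nonneg _) (norm_nonneg _)
      hnormT hσ2
  -- coefficients
  have hα0 : 0 < α := by
    rw [hαdef]
    apply div_pos
    · have : 0 < γ * η * (1 - η/2) := by
        apply mul_pos (mul_pos hγ0 hη0); linarith
      linarith
    · exact mul_pos (mul_pos two_pos (mul_pos (pow_pos hγ0 2) hσ)) (pow_pos hβ 2)
  have hαa : α * (β * (σ * γ^2)) = 1 + a := by
    rw [hαdef, hadef]; field_simp; ring
  have hcoef : (1 - ρ*γ)/(2*γ) = 1/(2*γ) - ρ/2 := by field_simp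
  have key : (1/β) * ‖lam (j+1+1) - lam (j+1)‖ ^ 2 + (a/β) * ‖lam (j+1+1) - lam (j+1)‖ ^ 2
      ≤ 2*α*‖z (j+1) - z j‖ ^ 2 + 2*α*(γ*Lf+1)^2*‖x (j+1+1) - x (j+1)‖ ^ 2 := by
    have h9 := mul_le_mul_of_nonneg_left hdual hα0.le
    have h10 : (1/β) * ‖lam (j+1+1) - lam (j+1)‖ ^ 2 + (a/β) * ‖lam (j+1+1) - lam (j+1)‖ ^ 2
        = α * (σ * γ^2 * ‖lam (j+1+1) - lam (j+1)‖ ^ 2) := by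
      have hb' : (1:ℝ)/β + a/β = α*(σ*γ^2) := by
        rw [← add_div, div_eq_iff hβne]
        linarith [hαa]
      calc (1/β) * ‖lam (j+1+1) - lam (j+1)‖ ^ 2 + (a/β) * ‖lam (j+1+1) - lam (j+1)‖ ^ 2
          = ((1:ℝ)/β + a/β) * ‖lam (j+1+1) - lam (j+1)‖ ^ 2 := by ring
        _ = α*(σ*γ^2) * ‖lam (j+1+1) - lam (j+1)‖ ^ 2 := by rw [hb']
        _ = α * (σ * γ^2 * ‖lam (j+1+1) - lam (j+1)‖ ^ 2) := by ring
    rw [h10]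
    calc α * (σ * γ^2 * ‖lam (j+1+1) - lam (j+1)‖ ^ 2)
        ≤ α * (2 * ‖z (j+1) - z j‖ ^ 2 + 2 * (γ*Lf+1)^2 * ‖x (j+1+1) - x (j+1)‖ ^ 2) := h9
      _ = 2*α*‖z (j+1) - z j‖ ^ 2 + 2*α*(γ*Lf+1)^2*‖x (j+1+1) - x (j+1)‖ ^ 2 := by ring
  rw [ge_iff_le, hcoef]
  linarith [D1, D2, D3, key]
end
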